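/- For any nonzero quaternion q with zero real part, the real bilinear form B on ℍ defined by B(u,v) = re(conj(q) · (conj(u)·v − conj(v)·u)) is skew-symmetric and nondegenerate. -/

import Mathlib

/-- For a nonzero imaginary quaternion `q`, the real bilinear form
`B(u,v) = re(conj(q) * (conj(u) v − conj(v) u))` on `ℍ` is skew-symmetric and
nondegenerate. -/
theorem imaginary_quaternion_symplectic_form (q : Quaternion ℝ) (hq : q ≠ 0)
    (hre : q.re = 0) :
    (∀ u v : Quaternion ℝ,
        (star q * (star u * v - star v * u)).re = -((star q * (star v * u - star u * v)).re)) ∧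
    (∀ u : Quaternion ℝ, (∀ v : Quaternion ℝ, (star q * (star u * v - star v * u)).re = 0)
        → u = 0) := by
  constructor
  · intro u v
    rw [show star u * v - star v * u = -(star v * u - star u * v) by noncomm_ring, mul_neg,
      Quaternion.re_neg]
  · intro u hu
    have h := hu (u * q)
    have hsq : star q = -q := by
      ext <;> simp [hre]
    have h1 : star u * (u * q) - star (u * q) * u
        = ((2 * Quaternion.normSq u : ℝ) : Quaternion ℝ) * q := by
      rw [StarMul.star_mul, hsq]
      rw [show star u * (u * q) - -q * star u * u = (star u * u) * q + q * (star u * u) by noncomm_ring]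
      rw [Quaternion.star_mul_self]
      rw [← Quaternion.coe_commutes]
      push_cast
      rw [show ((2:ℝ):Quaternion ℝ) * ↑(Quaternion.normSq u) * q = ↑(Quaternion.normSq u) * q + ↑(Quaternion.normSq u) * q by rw [show ((2:ℝ):Quaternion ℝ) = 1+1 by norm_cast]; noncomm_ring]
    rw [h1, ← mul_assoc, show star q * ((2 * Quaternion.normSq u : ℝ) : Quaternion ℝ)
      = ((2 * Quaternion.normSq u : ℝ) : Quaternion ℝ) * star q from (Quaternion.coe_commutes _ _).symm,
      mul_assoc, Quaternion.coe_mul_eq_smul, Quaternion.re_smul, Quaternion.star_mul_self, Quaternion.re_coe, smul_eq_mul] at h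
    have hq' : Quaternion.normSq q ≠ 0 := by
      simpa [Quaternion.normSq_eq_zero] using hq
    have hu0 : Quaternion.normSq u = 0 := by
      rcases mul_eq_zero.mp h with h' | h'
      · nlinarith
      · exact absurd h' hq'
    exact Quaternion.normSq_eq_zero.mp hu0
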